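/- Let Φ = (φ_n)_n and Ψ = (ψ_n)_n be two frames for H, with M_Ψ an upper frame (Bessel) bound for Ψ. Then Ψ is a generalized dual (g-dual) frame of Φ if and only if there exists an invertible bounded operator D on H such that T_Φ U_Ψ = S_Φ^{1/2} D and D D* ≤ M_Ψ · Id_H (as positive operators). -/

import Mathlib

noncomputable section

open ContinuousLinearMap
open scoped ComplexInnerProductSpace ENNReal

variable {H : Type*} [NormedAddCommGroup H] [InnerProductSpace ℂ H] [CompleteSpace H]

/-- The sequence space `ℓ²(ℕ)`. -/
abbrev Ltwo : Type := lp (fun _ : ℕ => ℂ) 2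

/-- `φ` is a Bessel sequence with Bessel bound `M`:
`∑ₙ |⟨f, φₙ⟩|² ≤ M‖f‖²` for every `f`.  (Mathlib inner products are conjugate-linear in the
first slot, so `⟪φ n, f⟫` corresponds to the paper's `⟨f, φₙ⟩`.) -/
def IsBesselBound (φ : ℕ → H) (M : ℝ) : Prop :=
  ∀ f : H, Summable (fun n => ‖(⟪φ n, f⟫ : ℂ)‖ ^ 2) ∧
    ∑' n, ‖(⟪φ n, f⟫ : ℂ)‖ ^ 2 ≤ M * ‖f‖ ^ 2

/-- `φ` is a frame with lower frame bound `m` and upper (Bessel) bound `M`. -/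
def IsFrameWith (φ : ℕ → H) (m M : ℝ) : Prop :=
  0 < m ∧ IsBesselBound φ M ∧
    ∀ f : H, m * ‖f‖ ^ 2 ≤ ∑' n, ‖(⟪φ n, f⟫ : ℂ)‖ ^ 2

/-- `φ` is a frame for `H`. -/
def IsFrame (φ : ℕ → H) : Prop := ∃ m M, IsFrameWith φ m M

/-- `U` is the analysis operator of `φ` : `U f = (⟨f, φₙ⟩)ₙ`.
The synthesis operator is then `T_φ = adjoint U` and the frame operator is
`S_φ = adjoint U ∘L U`. -/
def IsAnalysisOp (φ : ℕ → H) (U : H →L[ℂ] Ltwo) : Prop :=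
  ∀ (f : H) (n : ℕ), U f n = (⟪φ n, f⟫ : ℂ)

/-- The `ℓ²` norm squared is the sum of the squares of the coordinates. -/
lemma ltwo_norm_sq (x : Ltwo) : ‖x‖ ^ 2 = ∑' n, ‖x n‖ ^ 2 := by
  have h := lp.norm_rpow_eq_tsum (p := 2) (E := fun _ : ℕ => ℂ) (by norm_num) x
  have h2 : ((2 : ℝ≥0∞)).toReal = ((2 : ℕ) : ℝ) := by norm_num
  rw [h2] at h
  simpa [Real.rpow_natCast] using h

set_option maxHeartbeats 1000000 in
/-- Let Φ, Ψ be frames for H with M_Ψ an upper (Bessel) bound for Ψ.  Then Ψ is a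
g-dual frame of Φ (i.e. `T_Φ U_Ψ` is invertible) iff there is an invertible bounded operator
`D` with `T_Φ U_Ψ = S_Φ^{1/2} D` and `D D* ≤ M_Ψ · Id`.  Here the positive square root
`S_Φ^{1/2}` is represented by the operator `R`, the unique positive operator with
`R ∘L R = S_Φ = adjoint Uφ ∘L Uφ`. -/
theorem statement0 (φ ψ : ℕ → H) (mφ Mφ mψ Mψ : ℝ)
    (hφ : IsFrameWith φ mφ Mφ) (hψ : IsFrameWith ψ mψ Mψ)
    (Uφ Uψ : H →L[ℂ] Ltwo) (hUφ : IsAnalysisOp φ Uφ) (hUψ : IsAnalysisOp ψ Uψ)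
    (R : H →L[ℂ] H) (hRpos : R.IsPositive) (hRsq : R ∘L R = adjoint Uφ ∘L Uφ) :
    IsUnit (adjoint Uφ ∘L Uψ) ↔
      ∃ D : H →L[ℂ] H, IsUnit D ∧ adjoint Uφ ∘L Uψ = R ∘L D ∧
        ((Mψ : ℂ) • (1 : H →L[ℂ] H) - D ∘L adjoint D).IsPositive := by
  rcases subsingleton_or_nontrivial H with hH | hH
  · have hsub : Subsingleton (H →L[ℂ] H) := ⟨fun a b => by ext x; exact Subsingleton.elim _ _⟩
    constructor
    · intro _
      refine ⟨1, isUnit_one, Subsingleton.elim _ _, ?_, ?_⟩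
      · exact isSelfAdjoint_iff_isSymmetric.mp (Subsingleton.elim _ _)
      · intro x
        rw [Subsingleton.elim x (0 : H)]
        simp [ContinuousLinearMap.reApplyInnerSelf_apply]
    · intro _
      rw [Subsingleton.elim (adjoint Uφ ∘L Uψ) (1 : H →L[ℂ] H)]
      exact isUnit_one
  obtain ⟨hmφ, hBφ, hLφ⟩ := hφ
  obtain ⟨hmψ, hBψ, hLψ⟩ := hψ
  have hRsa : IsSelfAdjoint R := hRpos.isSelfAdjoint
  -- norms of analysis operators
  have hUφn : ∀ f : H, ‖Uφ f‖ ^ 2 = ∑' n, ‖(⟪φ n, f⟫ : ℂ)‖ ^ 2 := fun f => by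
    rw [ltwo_norm_sq]; exact tsum_congr fun n => by rw [hUφ f n]
  have hUψn : ∀ f : H, ‖Uψ f‖ ^ 2 = ∑' n, ‖(⟪ψ n, f⟫ : ℂ)‖ ^ 2 := fun f => by
    rw [ltwo_norm_sq]; exact tsum_congr fun n => by rw [hUψ f n]
  have hUφ_lower : ∀ f : H, mφ * ‖f‖ ^ 2 ≤ ‖Uφ f‖ ^ 2 := fun f => by
    rw [hUφn f]; exact hLφ f
  have hUψ_upper : ∀ f : H, ‖Uψ f‖ ^ 2 ≤ Mψ * ‖f‖ ^ 2 := fun f => by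
    rw [hUψn f]; exact (hBψ f).2
  -- Mψ is nonnegative
  obtain ⟨f0, hf0⟩ := exists_ne (0 : H)
  have hf0' : 0 < ‖f0‖ := norm_pos_iff.mpr hf0
  have hMψ : 0 ≤ Mψ := by
    have h1 := hLψ f0
    have h2 := (hBψ f0).2
    nlinarith [mul_pos hmψ (pow_pos hf0' 2)]
  -- operator norm bound for Uψ
  have hUψ_op : ‖Uψ‖ ≤ Real.sqrt Mψ := by
    refine opNorm_le_bound _ (Real.sqrt_nonneg Mψ) fun f => ?_
    calc ‖Uψ f‖ = Real.sqrt (‖Uψ f‖ ^ 2) := by rw [Real.sqrt_sq (norm_nonneg _)]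
      _ ≤ Real.sqrt (Mψ * ‖f‖ ^ 2) := Real.sqrt_le_sqrt (hUψ_upper f)
      _ = Real.sqrt Mψ * ‖f‖ := by
          rw [Real.sqrt_mul hMψ, Real.sqrt_sq (norm_nonneg _)]
  -- inner product identities
  have hSinner : ∀ f : H, (⟪(adjoint Uφ ∘L Uφ) f, f⟫ : ℂ) = ⟪Uφ f, Uφ f⟫ := fun f => by
    rw [comp_apply]; exact adjoint_inner_left Uφ f (Uφ f)
  have hRnorm : ∀ f : H, ‖R f‖ = ‖Uφ f‖ := by
    intro f
    have e1 : (⟪(R ∘L R) f, f⟫ : ℂ) = ⟪R f, R f⟫ := by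
      rw [comp_apply]
      nth_rewrite 1 [← hRsa.adjoint_eq]
      exact adjoint_inner_left R f (R f)
    have key : (⟪R f, R f⟫ : ℂ) = ⟪Uφ f, Uφ f⟫ := by
      rw [← e1, hRsq, hSinner]
    have key2 : ‖R f‖ ^ 2 = ‖Uφ f‖ ^ 2 := by
      rw [← inner_self_eq_norm_sq (𝕜 := ℂ), ← inner_self_eq_norm_sq (𝕜 := ℂ), key]
    calc ‖R f‖ = Real.sqrt (‖R f‖ ^ 2) := by rw [Real.sqrt_sq (norm_nonneg _)]
      _ = Real.sqrt (‖Uφ f‖ ^ 2) := by rw [key2]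
      _ = ‖Uφ f‖ := Real.sqrt_sq (norm_nonneg _)
  -- the frame operator of φ is invertible
  have hSunit : IsUnit (adjoint Uφ ∘L Uφ) := by
    refine isUnit_of_forall_le_norm_inner_map _ (c := mφ.toNNReal)
      (by simpa using hmφ) fun x => ?_
    rw [hSinner, inner_self_eq_norm_sq_to_K]
    simp only [norm_pow, RCLike.norm_ofReal, abs_norm]
    have hc : ((mφ.toNNReal : ℝ)) = mφ := Real.coe_toNNReal _ hmφ.le
    rw [hc, mul_comm]
    exact hUφ_lower x
  -- hence R is invertible
  have hRunit : IsUnit R := by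
    obtain ⟨u, hu⟩ := hSunit
    have huv : R * R = (u : H →L[ℂ] H) := by rw [hu, mul_def]; exact hRsq
    have hr : R * (R * ↑u⁻¹) = 1 := by
      rw [← mul_assoc, huv, u.mul_inv]
    have hl : (↑u⁻¹ * R) * R = 1 := by
      rw [mul_assoc, huv, u.inv_mul]
    have heq : (↑u⁻¹ * R : H →L[ℂ] H) = R * ↑u⁻¹ := left_inv_eq_right_inv hl hr
    refine ⟨⟨R, R * ↑u⁻¹, hr, ?_⟩, rfl⟩
    rw [← heq]; exact hl
  constructor
  · intro hT
    obtain ⟨uR, huR⟩ := hRunit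
    set T : H →L[ℂ] H := adjoint Uφ ∘L Uψ with hTdef
    set a : H →L[ℂ] H := ↑uR⁻¹ with hadef
    have hra : R * a = 1 := by rw [← huR]; exact uR.mul_inv
    have har : a * R = 1 := by rw [← huR]; exact uR.inv_mul
    have hsa : star a = a := by
      have h1 : star a * R = 1 := by
        have := congrArg star hra
        rwa [star_mul, star_one, hRsa.star_eq] at this
      exact left_inv_eq_right_inv h1 hra
    set D : H →L[ℂ] H := a ∘L T with hDdef
    have hTRD : T = R ∘L D := by
      rw [hDdef, ← mul_def, ← mul_def, ← mul_assoc, hra, one_mul]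
    -- adjoint of D
    have hDadj : adjoint D = adjoint Uψ ∘L (Uφ ∘L a) := by
      have : adjoint a = a := by rw [← star_eq_adjoint, hsa]
      rw [hDdef, hTdef, adjoint_comp, adjoint_comp, adjoint_adjoint, this, comp_assoc]
    -- norm bound on adjoint D
    have hDstar : ∀ x : H, ‖adjoint D x‖ ≤ Real.sqrt Mψ * ‖x‖ := by
      intro x
      have hRa : R (a x) = x := by
        have : (R * a) x = (1 : H →L[ℂ] H) x := by rw [hra]
        simpa [mul_def] using this
      have h1 : ‖Uφ (a x)‖ = ‖x‖ := by rw [← hRnorm, hRa]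
      calc ‖adjoint D x‖ = ‖adjoint Uψ (Uφ (a x))‖ := by rw [hDadj]; rfl
        _ ≤ ‖adjoint Uψ‖ * ‖Uφ (a x)‖ := (adjoint Uψ).le_opNorm _
        _ = ‖Uψ‖ * ‖x‖ := by rw [h1, LinearIsometryEquiv.norm_map]
        _ ≤ Real.sqrt Mψ * ‖x‖ := by
            exact mul_le_mul_of_nonneg_right hUψ_op (norm_nonneg _)
    refine ⟨D, ?_, hTRD, ?_, ?_⟩
    · rw [hDdef, ← mul_def]
      exact (uR⁻¹).isUnit.mul hT
    · -- self-adjointness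
      have h1 : IsSelfAdjoint ((Mψ : ℂ) • (1 : H →L[ℂ] H)) := by
        rw [IsSelfAdjoint, star_smul, star_one, RCLike.star_def, Complex.conj_ofReal]
      have h2 : IsSelfAdjoint (D ∘L adjoint D) := by
        rw [IsSelfAdjoint, ← mul_def, star_mul, star_eq_adjoint, star_eq_adjoint,
          adjoint_adjoint, mul_def]
      exact isSelfAdjoint_iff_isSymmetric.mp (h1.sub h2)
    · -- positivity
      intro x
      rw [ContinuousLinearMap.reApplyInnerSelf_apply]
      have hPx : ((Mψ : ℂ) • (1 : H →L[ℂ] H) - D ∘L adjoint D) x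
          = (Mψ : ℂ) • x - D (adjoint D x) := by
        simp [sub_apply, smul_apply, one_apply, comp_apply]
      have hinner : (⟪D (adjoint D x), x⟫ : ℂ) = ⟪adjoint D x, adjoint D x⟫ := by
        nth_rewrite 1 [← adjoint_adjoint D]
        exact adjoint_inner_left (adjoint D) x (adjoint D x)
      rw [hPx, inner_sub_left, inner_smul_left, hinner,
        inner_self_eq_norm_sq_to_K, inner_self_eq_norm_sq_to_K]
      rw [Complex.conj_ofReal]
      rw [show ((Mψ : ℂ)) = RCLike.ofReal (K := ℂ) Mψ from rfl]
      rw [← RCLike.ofReal_pow, ← RCLike.ofReal_pow,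
        ← RCLike.ofReal_mul, ← RCLike.ofReal_sub, RCLike.ofReal_re]
      have hb : ‖adjoint D x‖ ^ 2 ≤ Mψ * ‖x‖ ^ 2 := by
        have := hDstar x
        have hsq : ‖adjoint D x‖ ^ 2 ≤ (Real.sqrt Mψ * ‖x‖) ^ 2 :=
          pow_le_pow_left₀ (norm_nonneg _) this 2
        calc ‖adjoint D x‖ ^ 2 ≤ (Real.sqrt Mψ * ‖x‖) ^ 2 := hsq
          _ = Mψ * ‖x‖ ^ 2 := by rw [mul_pow, Real.sq_sqrt hMψ]
      linarith
  · rintro ⟨D, hD, hTD, -⟩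
    rw [hTD, ← mul_def]
    exact hRunit.mul hD
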